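/- Under the asymptotic framework, if a sequence of fixed thresholds ω_m > 0 satisfies v_m·2(1 − D(ω_m)) + 2D(ω_m·(1+u_m)^(−1/2)) − 1 → C_1 + C_2, then necessarily each risk component converges to its asymptotically optimal value individually: v_m·2(1 − D(ω_m)) → C_1 and 2D(ω_m·(1+u_m)^(−1/2)) − 1 → C_2, where C_1 = 2√C·d(√C)/γ and C_2 = 2D(√C) − 1. -/

import Mathlib

open MeasureTheory Filter

/-- Cumulative distribution function of a density `d` with respect to Lebesgue measure. -/
noncomputable def cdf (d : ℝ → ℝ) (x : ℝ) : ℝ := ∫ t in Set.Iic x, d t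

/-- A monotone polynomial tail (MPT) density with tail index `γ` and tail constant `Cd`:
a probability density function that is even (or supported on the nonnegative half-line),
strictly positive on `(0, ∞)`, satisfies `d x * x ^ (γ + 1) → Cd` as `x → ∞`, and has a
monotone likelihood ratio: for every `θ > 1`, `x ↦ d (x / θ) / d x` is strictly increasing
on `(0, ∞)`. -/
structure IsMPT (d : ℝ → ℝ) (γ Cd : ℝ) : Prop where
  gamma_pos : 0 < γ
  Cd_pos : 0 < Cd
  nonneg : ∀ x, 0 ≤ d x
  integrable : Integrable d
  integral_one : ∫ x, d x = 1
  even_or_halfline : (∀ x, d (-x) = d x) ∨ (∀ x < 0, d x = 0)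
  pos : ∀ x, 0 < x → 0 < d x
  tail : Tendsto (fun x => d x * x ^ (γ + 1)) atTop (nhds Cd)
  mlr : ∀ θ : ℝ, 1 < θ → StrictMonoOn (fun x => d (x / θ) / d x) (Set.Ioi 0)

open Set

variable {d : ℝ → ℝ} {γ Cd : ℝ}

lemma cdf_repr (hi : Integrable d) (x : ℝ) :
    cdf d x = cdf d 0 + ∫ t in (0:ℝ)..x, d t := by
  have := intervalIntegral.integral_Iic_sub_Iic (μ := volume) (f := d) (a := (0:ℝ)) (b := x)
    hi.integrableOn hi.integrableOn
  unfold cdf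
  linarith

lemma cdf_continuous (hi : Integrable d) : Continuous (cdf d) := by
  have : cdf d = fun x => cdf d 0 + ∫ t in (0:ℝ)..x, d t := funext (cdf_repr hi)
  rw [this]
  exact continuous_const.add (hi.continuous_primitive 0)

lemma cdf_mono (hi : Integrable d) (h0 : ∀ x, 0 ≤ d x) : Monotone (cdf d) := by
  intro a b hab
  exact setIntegral_mono_set hi.integrableOn (Filter.Eventually.of_forall h0)
    (HasSubset.Subset.eventuallyLE (Iic_subset_Iic.2 hab))

lemma one_sub_cdf (hi : Integrable d) (h1 : ∫ x, d x = 1) (x : ℝ) :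
    1 - cdf d x = ∫ t in Set.Ioi x, d t := by
  have := intervalIntegral.integral_Iic_add_Ioi (μ := volume) (f := d) (b := x)
    hi.integrableOn hi.integrableOn
  rw [h1] at this
  unfold cdf
  linarith

lemma cdf_le_one (hi : Integrable d) (h0 : ∀ x, 0 ≤ d x) (h1 : ∫ x, d x = 1) (x : ℝ) :
    cdf d x ≤ 1 := by
  have h2 := one_sub_cdf hi h1 x
  have : 0 ≤ ∫ t in Set.Ioi x, d t :=
    setIntegral_nonneg measurableSet_Ioi (fun t _ => h0 t)
  linarith

lemma cdf_nonneg (h0 : ∀ x, 0 ≤ d x) (x : ℝ) : 0 ≤ cdf d x :=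
  setIntegral_nonneg measurableSet_Iic (fun t _ => h0 t)


lemma tail_integral (h : IsMPT d γ Cd) :
    Tendsto (fun x => (∫ t in Set.Ioi x, d t) * x ^ γ) atTop (nhds (Cd / γ)) := by
  have hγ := h.gamma_pos
  have hCd := h.Cd_pos
  rw [Metric.tendsto_atTop]
  intro ε hε
  set εd : ℝ := min (γ * ε / 2) (Cd / 2) with hεd_def
  have hεd : 0 < εd := lt_min (by positivity) (by positivity)
  have hεd2 : εd ≤ γ * ε / 2 := min_le_left _ _
  have hexp : -(γ + 1) < -1 := by linarith
  obtain ⟨M₀, hM₀⟩ := (Metric.tendsto_atTop.1 h.tail) εd hεd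
  set M : ℝ := max M₀ 1 with hM_def
  have hM1 : (0:ℝ) < M := lt_of_lt_of_le zero_lt_one (le_max_right _ _)
  refine ⟨M, fun x hx => ?_⟩
  have hx0 : 0 < x := lt_of_lt_of_le hM1 hx
  have hbound : ∀ t ∈ Set.Ioi x, d t ≤ (Cd + εd) * t ^ (-(γ+1)) ∧
      (Cd - εd) * t ^ (-(γ+1)) ≤ d t := by
    intro t ht
    have ht0 : 0 < t := lt_trans hx0 ht
    have htM : M₀ ≤ t := le_trans (le_max_left _ _) (le_trans hx (le_of_lt ht))
    have hd := hM₀ t htM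
    rw [Real.dist_eq, abs_lt] at hd
    have hp : 0 < t ^ (γ+1) := Real.rpow_pos_of_pos ht0 _
    have hpn : 0 ≤ t ^ (-(γ+1)) := (Real.rpow_pos_of_pos ht0 _).le
    have hpow1 : t ^ (γ+1) * t ^ (-(γ+1)) = 1 := by
      rw [← Real.rpow_add ht0, show γ + 1 + -(γ+1) = 0 by ring, Real.rpow_zero]
    have hdt : d t = (d t * t ^ (γ+1)) * t ^ (-(γ+1)) := by
      rw [mul_assoc, hpow1, mul_one]
    constructor
    · rw [hdt]
      exact mul_le_mul_of_nonneg_right (by linarith [hd.2]) hpn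
    · rw [hdt]
      exact mul_le_mul_of_nonneg_right (by linarith [hd.1]) hpn
  have hint_rpow : IntegrableOn (fun t : ℝ => t ^ (-(γ+1))) (Set.Ioi x) :=
    integrableOn_Ioi_rpow_of_lt hexp hx0
  have hval : ∫ t in Set.Ioi x, t ^ (-(γ+1)) = x ^ (-γ) / γ := by
    rw [integral_Ioi_rpow_of_lt hexp hx0]
    have heq : -(γ+1) + 1 = -γ := by ring
    rw [heq]
    rw [Real.rpow_neg hx0.le]
    field_simp
  have hub : (∫ t in Set.Ioi x, d t) ≤ (Cd + εd) * (x ^ (-γ) / γ) := by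
    have hm := setIntegral_mono_on h.integrable.integrableOn (hint_rpow.const_mul (Cd + εd))
      measurableSet_Ioi (fun t ht => (hbound t ht).1)
    rwa [MeasureTheory.integral_const_mul, hval] at hm
  have hlb : (Cd - εd) * (x ^ (-γ) / γ) ≤ ∫ t in Set.Ioi x, d t := by
    have hm := setIntegral_mono_on (hint_rpow.const_mul (Cd - εd)) h.integrable.integrableOn
      measurableSet_Ioi (fun t ht => (hbound t ht).2)
    rwa [MeasureTheory.integral_const_mul, hval] at hm
  have hxg : 0 < x ^ γ := Real.rpow_pos_of_pos hx0 _
  have hxc : x ^ (-γ) * x ^ γ = 1 := by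
    rw [← Real.rpow_add hx0]; simp
  have key : x ^ (-γ) / γ * x ^ γ = 1 / γ := by
    rw [div_mul_eq_mul_div, hxc]
  have h1 : (∫ t in Set.Ioi x, d t) * x ^ γ ≤ (Cd + εd) / γ := by
    calc (∫ t in Set.Ioi x, d t) * x ^ γ ≤ ((Cd + εd) * (x ^ (-γ) / γ)) * x ^ γ :=
          mul_le_mul_of_nonneg_right hub hxg.le
      _ = (Cd + εd) / γ := by rw [mul_assoc, key, mul_one_div]
  have h2 : (Cd - εd) / γ ≤ (∫ t in Set.Ioi x, d t) * x ^ γ := by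
    calc (Cd - εd) / γ = ((Cd - εd) * (x ^ (-γ) / γ)) * x ^ γ := by
          rw [mul_assoc, key, mul_one_div]
      _ ≤ (∫ t in Set.Ioi x, d t) * x ^ γ := mul_le_mul_of_nonneg_right hlb hxg.le
  rw [Real.dist_eq, abs_lt]
  have e1 : (Cd + εd) / γ = Cd / γ + εd / γ := add_div _ _ _
  have e2 : (Cd - εd) / γ = Cd / γ - εd / γ := sub_div _ _ _
  have hεγ : εd / γ < ε := by
    rw [div_lt_iff₀ hγ]
    calc εd ≤ γ * ε / 2 := hεd2
      _ < ε * γ := by nlinarith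
  constructor <;> nlinarith

lemma gfun_strictMono (h : IsMPT d γ Cd) :
    StrictMonoOn (fun x => d x * x ^ (γ + 1)) (Set.Ioi 0) := by
  intro x hx y hy hxy
  simp only [Set.mem_Ioi] at hx hy
  set θ : ℝ := y / x with hθ_def
  have hθ : 1 < θ := (one_lt_div hx).2 hxy
  have hθ0 : 0 < θ := lt_trans zero_lt_one hθ
  have hyθ : y / θ = x := by
    rw [hθ_def, div_div_eq_mul_div, mul_comm, mul_div_assoc, div_self hy.ne', mul_one]
  -- limit of the likelihood ratio
  have hcomp : Tendsto (fun z => d (z / θ) * (z / θ) ^ (γ + 1)) atTop (nhds Cd) :=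
    h.tail.comp (tendsto_id.atTop_div_const hθ0)
  have hne : ∀ᶠ z in atTop, d (z / θ) / d z
      = (d (z / θ) * (z / θ) ^ (γ + 1)) / (d z * z ^ (γ + 1)) * θ ^ (γ + 1) := by
    filter_upwards [eventually_gt_atTop 0] with z hz
    have hz0 : (0:ℝ) < z := hz
    have h1 : (z / θ) ^ (γ + 1) = z ^ (γ + 1) / θ ^ (γ + 1) :=
      Real.div_rpow hz0.le hθ0.le _
    have h2 : (0:ℝ) < z ^ (γ + 1) := Real.rpow_pos_of_pos hz0 _
    have h3 : (0:ℝ) < θ ^ (γ + 1) := Real.rpow_pos_of_pos hθ0 _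
    have h4 : 0 < d z := h.pos z hz0
    field_simp [h1]
    rw [h1, mul_assoc, div_mul_cancel₀ _ h3.ne']
  have hlim : Tendsto (fun z => d (z / θ) / d z) atTop (nhds (θ ^ (γ + 1))) := by
    have : Tendsto (fun z => (d (z / θ) * (z / θ) ^ (γ + 1)) / (d z * z ^ (γ + 1)) * θ ^ (γ + 1))
        atTop (nhds (Cd / Cd * θ ^ (γ + 1))) :=
      (hcomp.div h.tail h.Cd_pos.ne').mul_const _
    rw [div_self h.Cd_pos.ne', one_mul] at this
    exact this.congr' (hne.mono fun z hz => hz.symm)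
  -- strict bound r y < θ ^ (γ+1)
  have hy1 : y < y + 1 := lt_add_one y
  have hy1' : (0:ℝ) < y + 1 := by linarith
  have hstep : d (y / θ) / d y < d ((y+1) / θ) / d (y+1) :=
    h.mlr θ hθ (Set.mem_Ioi.2 hy) (Set.mem_Ioi.2 hy1') hy1
  have hle : d ((y+1) / θ) / d (y+1) ≤ θ ^ (γ + 1) := by
    refine ge_of_tendsto hlim ?_
    filter_upwards [eventually_ge_atTop (y+1)] with z hz
    rcases eq_or_lt_of_le hz with rfl | hz'
    · exact le_rfl
    · exact le_of_lt (h.mlr θ hθ (Set.mem_Ioi.2 hy1') (Set.mem_Ioi.2 (lt_trans hy1' hz')) hz')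
  have hry : d x / d y < θ ^ (γ + 1) := by rw [← hyθ]; exact lt_of_lt_of_le hstep hle
  have hθpow : θ ^ (γ + 1) = y ^ (γ + 1) / x ^ (γ + 1) := Real.div_rpow (le_of_lt (lt_trans hx hxy)) hx.le _
  rw [hθpow, div_lt_div_iff₀ (h.pos y (lt_trans hx hxy)) (Real.rpow_pos_of_pos hx _)] at hry
  dsimp only
  nlinarith [hry]

lemma cdf_hasDerivAt (h : IsMPT d γ Cd) (hcont : ContinuousOn d (Set.Ioi 0)) {x : ℝ}
    (hx : 0 < x) : HasDerivAt (cdf d) (d x) x := by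
  have hca : ContinuousAt d x := hcont.continuousAt (Ioi_mem_nhds hx)
  have hmeas : StronglyMeasurableAtFilter d (nhds x) volume :=
    ⟨Set.univ, Filter.univ_mem, (h.integrable.aestronglyMeasurable).restrict⟩
  have hD := intervalIntegral.integral_hasDerivAt_right
    (h.integrable.intervalIntegrable (a := 0) (b := x)) hmeas hca
  have heq : cdf d = fun t => cdf d 0 + ∫ s in (0:ℝ)..t, d s := funext (cdf_repr h.integrable)
  rw [heq]
  simpa using hD.const_add (cdf d 0)

lemma cdf_tendsto_one (h : IsMPT d γ Cd) : Tendsto (cdf d) atTop (nhds 1) := by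
  have h1 : Tendsto (fun x : ℝ => (1 - cdf d x)) atTop (nhds 0) := by
    have h2 : Tendsto (fun x : ℝ => ((∫ t in Set.Ioi x, d t) * x ^ γ) * x ^ (-γ)) atTop
        (nhds (Cd / γ * 0)) := (tail_integral h).mul (tendsto_rpow_neg_atTop h.gamma_pos)
    rw [mul_zero] at h2
    apply h2.congr'
    filter_upwards [eventually_gt_atTop 0] with x hx
    rw [mul_assoc, ← Real.rpow_add hx, show γ + -γ = 0 by ring, Real.rpow_zero, mul_one,
      ← one_sub_cdf h.integrable h.integral_one]
  have := tendsto_const_nhds (α := ℝ) (x := (1:ℝ)) (f := atTop).sub h1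
  simpa using this

section Hfun

variable (d γ) in
noncomputable def Hfun (A : ℝ) : ℝ → ℝ := fun t => 2 * A * t ^ (-γ) / γ + (2 * cdf d t - 1)

lemma Hfun_hasDerivAt (h : IsMPT d γ Cd) (hcont : ContinuousOn d (Set.Ioi 0)) (A : ℝ) {t : ℝ}
    (ht : 0 < t) : HasDerivAt (Hfun d γ A) (2 * (d t - A * t ^ (-γ - 1))) t := by
  have hγ := h.gamma_pos
  have p1 : HasDerivAt (fun t : ℝ => 2 * A * t ^ (-γ) / γ) (2 * A * (-γ * t ^ (-γ - 1)) / γ) t :=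
    ((Real.hasDerivAt_rpow_const (p := -γ) (Or.inl ht.ne')).const_mul (2 * A)).div_const γ
  have p2 : HasDerivAt (fun t : ℝ => 2 * cdf d t - 1) (2 * d t) t :=
    ((cdf_hasDerivAt h hcont ht).const_mul 2).sub_const 1
  have := p1.add p2
  refine this.congr_deriv ?_
  rw [show 2 * A * (-γ * t ^ (-γ - 1)) / γ = -(2 * A * t ^ (-γ - 1)) * (γ / γ) by ring, div_self hγ.ne']
  ring

lemma Hfun_strictMonoOn (h : IsMPT d γ Cd) (hcont : ContinuousOn d (Set.Ioi 0)) {r : ℝ}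
    (hr : 0 < r) : StrictMonoOn (Hfun d γ (d r * r ^ (γ + 1))) (Set.Ici r) := by
  set A := d r * r ^ (γ + 1) with hA
  apply strictMonoOn_of_deriv_pos (convex_Ici r)
  · intro x hx
    exact (Hfun_hasDerivAt h hcont A (lt_of_lt_of_le hr hx)).continuousAt.continuousWithinAt
  · intro x hx
    rw [interior_Ici] at hx
    have hx0 : 0 < x := lt_trans hr hx
    rw [(Hfun_hasDerivAt h hcont A hx0).deriv]
    have hgt : A < d x * x ^ (γ + 1) := gfun_strictMono h (Set.mem_Ioi.2 hr) (Set.mem_Ioi.2 hx0) hx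
    have hc : x ^ (-γ - 1) * x ^ (γ + 1) = 1 := by
      rw [← Real.rpow_add hx0, show -γ - 1 + (γ + 1) = 0 by ring, Real.rpow_zero]
    have hp : 0 < x ^ (-γ - 1) := Real.rpow_pos_of_pos hx0 _
    have : A * x ^ (-γ - 1) < d x := by
      have := mul_lt_mul_of_pos_left hgt hp
      calc A * x ^ (-γ - 1) = x ^ (-γ - 1) * A := mul_comm _ _
        _ < x ^ (-γ - 1) * (d x * x ^ (γ + 1)) := this
        _ = d x * (x ^ (-γ - 1) * x ^ (γ + 1)) := by ring
        _ = d x := by rw [hc, mul_one]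
    linarith

lemma Hfun_strictAntiOn (h : IsMPT d γ Cd) (hcont : ContinuousOn d (Set.Ioi 0)) {r : ℝ}
    (hr : 0 < r) : StrictAntiOn (Hfun d γ (d r * r ^ (γ + 1))) (Set.Ioc 0 r) := by
  set A := d r * r ^ (γ + 1) with hA
  apply strictAntiOn_of_deriv_neg (convex_Ioc 0 r)
  · intro x hx
    exact (Hfun_hasDerivAt h hcont A hx.1).continuousAt.continuousWithinAt
  · intro x hx
    rw [interior_Ioc] at hx
    have hx0 : 0 < x := hx.1
    rw [(Hfun_hasDerivAt h hcont A hx0).deriv]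
    have hgt : d x * x ^ (γ + 1) < A := gfun_strictMono h (Set.mem_Ioi.2 hx0) (Set.mem_Ioi.2 hr) hx.2
    have hc : x ^ (-γ - 1) * x ^ (γ + 1) = 1 := by
      rw [← Real.rpow_add hx0, show -γ - 1 + (γ + 1) = 0 by ring, Real.rpow_zero]
    have hp : 0 < x ^ (-γ - 1) := Real.rpow_pos_of_pos hx0 _
    have : d x < A * x ^ (-γ - 1) := by
      have := mul_lt_mul_of_pos_left hgt hp
      calc d x = d x * (x ^ (-γ - 1) * x ^ (γ + 1)) := by rw [hc, mul_one]
        _ = x ^ (-γ - 1) * (d x * x ^ (γ + 1)) := by ring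
        _ < x ^ (-γ - 1) * A := this
        _ = A * x ^ (-γ - 1) := mul_comm _ _
    linarith

lemma Hfun_tendsto (h : IsMPT d γ Cd) (A : ℝ) :
    Tendsto (Hfun d γ A) atTop (nhds 1) := by
  have h1 : Tendsto (fun t : ℝ => 2 * A * t ^ (-γ) / γ) atTop (nhds (2 * A * 0 / γ)) :=
    ((tendsto_rpow_neg_atTop h.gamma_pos).const_mul (2 * A)).div_const γ
  have h2 : Tendsto (fun t : ℝ => 2 * cdf d t - 1) atTop (nhds (2 * 1 - 1)) :=
    ((cdf_tendsto_one h).const_mul 2).sub_const 1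
  have := h1.add h2
  norm_num at this
  exact this

end Hfun

set_option maxHeartbeats 2000000 in
/-- Under the asymptotic framework, if the Bayes risk per test of a sequence of fixed
thresholds converges to the optimal value `C₁ + C₂`, then each risk component converges to
its asymptotically optimal value individually. -/
theorem fixed_threshold_components_converge (d : ℝ → ℝ) (γ Cd : ℝ) (h : IsMPT d γ Cd)
    (heven : ∀ x, d (-x) = d x) (hcont : ContinuousOn d (Set.Ioi 0))
    (C : ℝ) (hC : 0 < C)
    (u v : ℕ → ℝ) (hu : ∀ m, 0 < u m) (hu' : Tendsto u atTop atTop)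
    (hv : ∀ m, 0 < v m)
    (hvu : Tendsto (fun m => v m * u m ^ (-(γ / 2))) atTop
      (nhds (C ^ ((γ + 1) / 2) * d (Real.sqrt C) / Cd)))
    (ω : ℕ → ℝ) (hω : ∀ m, 0 < ω m)
    (hABOS : Tendsto
      (fun m => v m * (2 * (1 - cdf d (ω m)))
        + (2 * cdf d (ω m * (1 + u m) ^ (-(1 : ℝ) / 2)) - 1)) atTop
      (nhds (2 * Real.sqrt C * d (Real.sqrt C) / γ + (2 * cdf d (Real.sqrt C) - 1)))) :
    Tendsto (fun m => v m * (2 * (1 - cdf d (ω m)))) atTop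
      (nhds (2 * Real.sqrt C * d (Real.sqrt C) / γ)) ∧
    Tendsto (fun m => 2 * cdf d (ω m * (1 + u m) ^ (-(1 : ℝ) / 2)) - 1) atTop
      (nhds (2 * cdf d (Real.sqrt C) - 1)) := by
  have hγ := h.gamma_pos
  have hCd := h.Cd_pos
  set r := Real.sqrt C with hr_def
  have hr : 0 < r := Real.sqrt_pos.2 hC
  have hdr : 0 < d r := h.pos r hr
  have hrp : ∀ a : ℝ, r ^ a = C ^ (a / 2) := by
    intro a
    rw [hr_def, Real.sqrt_eq_rpow, ← Real.rpow_mul hC.le]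
    congr 1; ring
  set A := d r * r ^ (γ + 1) with hA_def
  have hA0 : 0 < A := mul_pos hdr (Real.rpow_pos_of_pos hr _)
  have hAC : C ^ ((γ + 1) / 2) * d r = A := by rw [hA_def, hrp]; ring
  have hrr : A * r ^ (-γ) = d r * r := by
    rw [hA_def, mul_assoc, ← Real.rpow_add hr, show γ + 1 + -γ = 1 by ring, Real.rpow_one]
  have hSval : 2 * r * d r / γ + (2 * cdf d r - 1) = Hfun d γ A r := by
    simp only [Hfun]
    linear_combination (-(2 / γ)) * hrr
  set S := Hfun d γ A r with hS_def
  rw [hSval] at hABOS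
  rw [hAC] at hvu
  have hACd : (0:ℝ) < A / Cd := div_pos hA0 hCd
  -- the inner threshold sequence
  set s : ℕ → ℝ := fun m => ω m * (1 + u m) ^ (-(1:ℝ) / 2) with hs_def
  have h1u : ∀ m, (0:ℝ) < 1 + u m := fun m => by linarith [hu m]
  have hs0 : ∀ m, 0 < s m := fun m =>
    mul_pos (hω m) (Real.rpow_pos_of_pos (h1u m) _)
  -- basic rpow identities
  have he3 : ∀ m, u m ^ (-(γ / 2)) * u m ^ (γ / 2) = 1 := fun m => by
    rw [← Real.rpow_add (hu m), show -(γ/2) + γ/2 = 0 by ring, Real.rpow_zero]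
  have he1 : ∀ m, s m ^ γ = ω m ^ γ * (1 + u m) ^ (-(γ / 2)) := by
    intro m
    simp only [hs_def]
    rw [Real.mul_rpow (hω m).le (Real.rpow_pos_of_pos (h1u m) _).le,
      ← Real.rpow_mul (h1u m).le, show (-(1:ℝ)/2) * γ = -(γ/2) by ring]
  have he2 : ∀ m, (u m / (1 + u m)) ^ (γ / 2) = u m ^ (γ / 2) * (1 + u m) ^ (-(γ / 2)) := by
    intro m
    rw [Real.div_rpow (hu m).le (h1u m).le, Real.rpow_neg (h1u m).le, div_eq_mul_inv]
  have hid : ∀ m, (v m * (2 * (1 - cdf d (ω m)))) * s m ^ γ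
      = 2 * (v m * u m ^ (-(γ / 2))) * ((1 - cdf d (ω m)) * ω m ^ γ)
        * ((u m / (1 + u m)) ^ (γ / 2)) := by
    intro m
    rw [he1 m, he2 m]
    linear_combination (-(2 * v m * (1 - cdf d (ω m)) * ω m ^ γ * (1 + u m) ^ (-(γ/2)))) * he3 m
  -- limits of auxiliary sequences
  have h1u' : Tendsto (fun m => 1 + u m) atTop atTop :=
    tendsto_atTop_add_const_left _ 1 hu'
  have hfrac : Tendsto (fun m => u m / (1 + u m)) atTop (nhds 1) := by
    have hinv : Tendsto (fun m => (1 + u m)⁻¹) atTop (nhds 0) := h1u'.inv_tendsto_atTop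
    have h2 : Tendsto (fun m => 1 - (1 + u m)⁻¹) atTop (nhds (1 - 0)) :=
      tendsto_const_nhds.sub hinv
    rw [sub_zero] at h2
    apply h2.congr
    intro m
    rw [eq_div_iff (h1u m).ne', sub_mul, one_mul, inv_mul_cancel₀ (h1u m).ne']
    ring
  have hrho : Tendsto (fun m => (u m / (1 + u m)) ^ (γ / 2)) atTop (nhds 1) := by
    have hc1 : ContinuousAt (fun x : ℝ => x ^ (γ / 2)) 1 :=
      Real.continuousAt_rpow_const 1 (γ/2) (Or.inl one_ne_zero)
    have := hc1.tendsto.comp hfrac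
    simpa [Function.comp_def] using this
  have hvtop : Tendsto v atTop atTop := by
    have h1 : Tendsto (fun m => u m ^ (γ / 2)) atTop atTop :=
      (tendsto_rpow_atTop (by positivity)).comp hu'
    have h2 : Tendsto (fun m => (v m * u m ^ (-(γ / 2))) * u m ^ (γ / 2)) atTop atTop :=
      Filter.Tendsto.pos_mul_atTop hACd hvu h1
    apply h2.congr
    intro m
    rw [mul_assoc, he3 m, mul_one]
  have hq : Tendsto (fun x : ℝ => (1 - cdf d x) * x ^ γ) atTop (nhds (Cd / γ)) := by
    apply (tail_integral h).congr
    intro x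
    rw [one_sub_cdf h.integrable h.integral_one]
  have hcdf01 : ∀ x : ℝ, 0 ≤ cdf d x ∧ cdf d x ≤ 1 := fun x =>
    ⟨cdf_nonneg h.nonneg x, cdf_le_one h.integrable h.nonneg h.integral_one x⟩
  -- main convergence: s m → r
  have hsC : Tendsto s atTop (nhds r) := by
    rw [Metric.tendsto_nhds]
    intro ε₀ hε₀
    set ε' := min ε₀ (r / 2) with hε'_def
    have hε' : 0 < ε' := lt_min hε₀ (by linarith)
    have hε'r : ε' ≤ r / 2 := min_le_right _ _
    have hε'ε₀ : ε' ≤ ε₀ := min_le_left _ _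
    set a := r - ε' with ha_def
    set b := r + ε' with hb_def
    have ha0 : 0 < a := by simp only [ha_def]; linarith
    have har : a < r := by simp only [ha_def]; linarith
    have hrb : r < b := by simp only [hb_def]; linarith
    have hHa : S < Hfun d γ A a :=
      Hfun_strictAntiOn h hcont hr ⟨ha0, har.le⟩ ⟨hr, le_rfl⟩ har
    have hHb : S < Hfun d γ A b :=
      Hfun_strictMonoOn h hcont hr Set.self_mem_Ici (Set.mem_Ici.2 hrb.le) hrb
    set δ₀ := min (Hfun d γ A a) (Hfun d γ A b) - S with hδ₀_def
    have hδ₀ : 0 < δ₀ := by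
      simp only [hδ₀_def]
      rcases min_cases (Hfun d γ A a) (Hfun d γ A b) with ⟨heq, _⟩ | ⟨heq, _⟩ <;>
        rw [heq] <;> linarith
    set δ := δ₀ / 2 with hδ_def
    have hδ : 0 < δ := by positivity
    have hSm1 : -1 < S := by
      have h1 := (hcdf01 r).1
      have h2 : 0 < 2 * A * r ^ (-γ) / γ :=
        div_pos (mul_pos (by linarith) (Real.rpow_pos_of_pos hr _)) hγ
      have : S = 2 * A * r ^ (-γ) / γ + (2 * cdf d r - 1) := rfl
      linarith
    set K := S + δ + 1 with hK_def
    have hK : 0 < K := by simp only [hK_def]; linarith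
    set ε₂ := min (1/2 : ℝ) (δ₀ / (4 * K)) with hε₂_def
    have hε₂ : 0 < ε₂ := lt_min (by norm_num) (by positivity)
    have hε₂h : ε₂ ≤ 1/2 := min_le_left _ _
    have hε₂K : ε₂ ≤ δ₀ / (4 * K) := min_le_right _ _
    set ε₁ := ε₂ * Cd / (2 * γ) with hε₁_def
    have hε₁ : 0 < ε₁ := by positivity
    have hε₁lt : ε₁ < Cd / γ := by
      rw [hε₁_def, div_lt_div_iff₀ (by positivity) hγ]
      have h12 := mul_le_mul_of_nonneg_right hε₂h (le_of_lt (mul_pos hγ hCd))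
      have := mul_pos hγ hCd
      nlinarith [h12, this]
    set L : ℝ := (1 - ε₂) * (2 * A) / γ with hL_def
    -- threshold X for the tail regime
    obtain ⟨M, hM⟩ := eventually_atTop.1
      (hq.eventually (eventually_gt_nhds (show Cd / γ - ε₁ < Cd / γ by linarith)))
    obtain ⟨M₂, hM₂⟩ := eventually_atTop.1
      (hq.eventually (eventually_gt_nhds (show (0:ℝ) < Cd / γ by positivity)))
    set X := max M (max M₂ 1) with hX_def
    have hXM : M ≤ X := le_max_left _ _
    have hX1 : (1:ℝ) ≤ X := le_trans (le_max_right _ _) (le_max_right _ _)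
    have hX0 : (0:ℝ) < X := lt_of_lt_of_le zero_lt_one hX1
    have hqX : 0 < (1 - cdf d X) * X ^ γ :=
      hM₂ X (le_trans (le_max_left _ _) (le_max_right _ _))
    have hXγ : 0 < X ^ γ := Real.rpow_pos_of_pos hX0 _
    have hη : 0 < 1 - cdf d X := by
      by_contra hc
      push_neg at hc
      have h0 := mul_le_mul_of_nonneg_right hc hXγ.le
      rw [zero_mul] at h0
      linarith
    set η := 1 - cdf d X with hη_def
    -- the three eventual facts
    have hev1 : ∀ᶠ m in atTop,
        v m * (2 * (1 - cdf d (ω m))) + (2 * cdf d (s m) - 1) < S + δ :=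
      hABOS.eventually (eventually_lt_nhds (by linarith))
    have hlimL : Tendsto (fun m => 2 * (v m * u m ^ (-(γ / 2))) * (Cd / γ - ε₁)
        * ((u m / (1 + u m)) ^ (γ / 2))) atTop (nhds (2 * (A / Cd) * (Cd / γ - ε₁) * 1)) :=
      ((hvu.const_mul 2).mul_const _).mul hrho
    have hLlt : L < 2 * (A / Cd) * (Cd / γ - ε₁) * 1 := by
      have hdiff : 2 * (A / Cd) * (Cd / γ - ε₁) * 1 - L = A * ε₂ / γ := by
        rw [hL_def, hε₁_def]
        field_simp
        ring
      have : 0 < A * ε₂ / γ := by positivity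
      linarith
    have hev2 : ∀ᶠ m in atTop, L < 2 * (v m * u m ^ (-(γ / 2))) * (Cd / γ - ε₁)
        * ((u m / (1 + u m)) ^ (γ / 2)) :=
      hlimL.eventually (eventually_gt_nhds hLlt)
    have hev3 : ∀ᶠ m in atTop, (K + 1) / (2 * η) ≤ v m :=
      hvtop.eventually_ge_atTop _
    filter_upwards [hev1, hev2, hev3] with m h1 h2 h3
    by_contra hcon
    push_neg at hcon
    have hfar : ε' ≤ |s m - r| := le_trans hε'ε₀ (by rwa [Real.dist_eq] at hcon)
    -- we derive a contradiction with h1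
    have hmain : S + δ ≤ v m * (2 * (1 - cdf d (ω m))) + (2 * cdf d (s m) - 1) := by
      have hg1 : -1 ≤ 2 * cdf d (s m) - 1 := by linarith [(hcdf01 (s m)).1]
      by_cases hωX : ω m ≤ X
      · -- small threshold: first term is huge
        have hDle : cdf d (ω m) ≤ cdf d X := cdf_mono h.integrable h.nonneg hωX
        have hvm : K + 1 ≤ v m * (2 * η) := by
          rw [div_le_iff₀ (by positivity)] at h3
          linarith
        have hfm : v m * (2 * η) ≤ v m * (2 * (1 - cdf d (ω m))) :=
          mul_le_mul_of_nonneg_left (by simp only [hη_def]; linarith) (hv m).le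
        linarith
      · -- tail regime
        push_neg at hωX
        have hqω : Cd / γ - ε₁ < (1 - cdf d (ω m)) * ω m ^ γ :=
          hM (ω m) (le_trans hXM hωX.le)
        have hc0 : 0 < v m * u m ^ (-(γ / 2)) :=
          mul_pos (hv m) (Real.rpow_pos_of_pos (hu m) _)
        have hρ0 : 0 < (u m / (1 + u m)) ^ (γ / 2) :=
          Real.rpow_pos_of_pos (div_pos (hu m) (h1u m)) _
        have hstep : 2 * (v m * u m ^ (-(γ / 2))) * (Cd / γ - ε₁)
            * ((u m / (1 + u m)) ^ (γ / 2))
            ≤ 2 * (v m * u m ^ (-(γ / 2))) * ((1 - cdf d (ω m)) * ω m ^ γ)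
            * ((u m / (1 + u m)) ^ (γ / 2)) := by
          apply mul_le_mul_of_nonneg_right _ hρ0.le
          exact mul_le_mul_of_nonneg_left hqω.le (by positivity)
        have hfsγ : L < (v m * (2 * (1 - cdf d (ω m)))) * s m ^ γ := by
          rw [hid m]
          linarith
        have hsγ : 0 < s m ^ γ := Real.rpow_pos_of_pos (hs0 m) _
        have hsnγ : 0 < s m ^ (-γ) := Real.rpow_pos_of_pos (hs0 m) _
        have hsc : s m ^ γ * s m ^ (-γ) = 1 := by
          rw [← Real.rpow_add (hs0 m), show γ + -γ = 0 by ring, Real.rpow_zero]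
        have hfL : L * s m ^ (-γ) < v m * (2 * (1 - cdf d (ω m))) := by
          have := mul_lt_mul_of_pos_right hfsγ hsnγ
          rwa [mul_assoc, hsc, mul_one] at this
        have hLX : L * s m ^ (-γ) = (1 - ε₂) * (2 * A * s m ^ (-γ) / γ) := by
          rw [hL_def]; ring
        set Y := 2 * A * s m ^ (-γ) / γ with hY_def
        have hY0 : 0 < Y := by
          simp only [hY_def]
          exact div_pos (mul_pos (by linarith) hsnγ) hγ
        have hfY : (1 - ε₂) * Y < v m * (2 * (1 - cdf d (ω m))) := by
          rw [← hLX]; exact hfL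
        by_cases hKc : K ≤ (1 - ε₂) * Y
        · linarith
        · push_neg at hKc
          have hHs : S + δ₀ ≤ Hfun d γ A (s m) := by
            rcases le_abs.1 hfar with hright | hleft
            · -- s m ≥ b
              have hbs : b ≤ s m := by simp only [hb_def]; linarith
              have := (Hfun_strictMonoOn h hcont hr).monotoneOn
                (Set.mem_Ici.2 hrb.le) (Set.mem_Ici.2 (le_trans hrb.le hbs)) hbs
              have hminb : min (Hfun d γ A a) (Hfun d γ A b) ≤ Hfun d γ A b :=
                min_le_right _ _
              simp only [hδ₀_def]
              linarith
            · -- s m ≤ a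
              have hsa : s m ≤ a := by simp only [ha_def]; linarith
              have := (Hfun_strictAntiOn h hcont hr).antitoneOn
                ⟨hs0 m, le_trans hsa har.le⟩ ⟨ha0, har.le⟩ hsa
              have hmina : min (Hfun d γ A a) (Hfun d γ A b) ≤ Hfun d γ A a :=
                min_le_left _ _
              simp only [hδ₀_def]
              linarith
          have hHs_eq : Hfun d γ A (s m) = Y + (2 * cdf d (s m) - 1) := rfl
          have h12 : (1/2 : ℝ) * Y ≤ (1 - ε₂) * Y :=
            mul_le_mul_of_nonneg_right (by linarith) hY0.le
          have hY2K : Y ≤ 2 * K := by linarith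
          have h4K : ε₂ * (4 * K) ≤ δ₀ := by
            have h5 := mul_le_mul_of_nonneg_right hε₂K
              (le_of_lt (show (0:ℝ) < 4 * K by positivity))
            rwa [div_mul_cancel₀ _ (show (4 * K : ℝ) ≠ 0 by positivity)] at h5
          have hε₂Y : ε₂ * Y ≤ δ₀ / 2 := by
            have h6 : ε₂ * Y ≤ ε₂ * (2 * K) := mul_le_mul_of_nonneg_left hY2K hε₂.le
            linarith
          rw [hHs_eq] at hHs
          linarith
    linarith
  -- conclude
  have hgoal2 : Tendsto (fun m => 2 * cdf d (s m) - 1) atTop (nhds (2 * cdf d r - 1)) := by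
    have := ((cdf_continuous h.integrable).tendsto r).comp hsC
    exact (this.const_mul 2).sub_const 1
  constructor
  · have hsub := hABOS.sub hgoal2
    have heq2 : ∀ m, (v m * (2 * (1 - cdf d (ω m))) + (2 * cdf d (s m) - 1))
        - (2 * cdf d (s m) - 1) = v m * (2 * (1 - cdf d (ω m))) := fun m => by ring
    have hlim : S - (2 * cdf d r - 1) = 2 * r * d r / γ := by
      rw [← hSval]; ring
    rw [hlim] at hsub
    exact hsub.congr heq2
  · exact hgoal2
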